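/- Let G be a connected graph with no induced P_5 and no induced C_4, containing an induced 5-cycle C. Let V_1 be the set of vertices adjacent to all five vertices of C, and V_2 the set of vertices with exactly three neighbors on C. Then every vertex of V_1 is adjacent to every other vertex of V_1 ∪ V_2 ∪ V(C). -/

import Mathlib

open SimpleGraph

lemma c4_embed {V : Type*} (G : SimpleGraph V) (a b c d : V)
    (hab : G.Adj a b) (hbc : G.Adj b c) (hcd : G.Adj c d) (hda : G.Adj d a)
    (hac : ¬ G.Adj a c) (hbd : ¬ G.Adj b d) (hac' : a ≠ c) (hbd' : b ≠ d) :
    Nonempty (cycleGraph 4 ↪g G) := by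
  have n1 := hab.ne; have n2 := hbc.ne; have n3 := hcd.ne; have n4 := hda.ne
  have n5 := hab.ne'; have n6 := hbc.ne'; have n7 := hcd.ne'; have n8 := hda.ne'
  have hca' := hac'.symm; have hdb' := hbd'.symm
  have hca : ¬ G.Adj c a := fun h => hac h.symm
  have hdb : ¬ G.Adj d b := fun h => hbd h.symm
  refine ⟨⟨⟨![a,b,c,d], ?_⟩, ?_⟩⟩
  · intro i j hij
    fin_cases i <;> fin_cases j <;> simp_all
  · intro i j; show G.Adj (![a,b,c,d] i) (![a,b,c,d] j) ↔ _
    fin_cases i <;> fin_cases j <;>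
      simp_all [cycleGraph_adj, hab.symm, hbc.symm, hcd.symm, hda.symm] <;> decide

lemma fin5_nonedge : ∀ i j k : Fin 5, i ≠ j → i ≠ k → j ≠ k →
    ¬(cycleGraph 5).Adj i j ∨ ¬(cycleGraph 5).Adj i k ∨ ¬(cycleGraph 5).Adj j k := by
  decide

/-- In a connected `{P_5, C_4}`-free graph with an induced 5-cycle `C`, letting
`V₁` be the vertices adjacent to all of `C` and `V₂` those with exactly three
neighbors on `C`, every vertex of `V₁` is adjacent to every other vertex of
`V₁ ∪ V₂ ∪ V(C)`. -/
theorem P5_C4_free_C5_V1_universal {V : Type*} (G : SimpleGraph V) (hconn : G.Connected)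
    (hP5 : ¬ Nonempty (pathGraph 5 ↪g G))
    (hC4 : ¬ Nonempty (cycleGraph 4 ↪g G))
    (f : cycleGraph 5 ↪g G)
    (V₁ V₂ : Set V)
    (hV₁ : V₁ = {v | ∀ u ∈ Set.range f, G.Adj v u})
    (hV₂ : V₂ = {v | v ∉ Set.range f ∧ {u | u ∈ Set.range f ∧ G.Adj v u}.ncard = 3}) :
    ∀ v ∈ V₁, ∀ u ∈ V₁ ∪ V₂ ∪ Set.range f, u ≠ v → G.Adj v u := by
  intro v hv u hu hne
  rw [hV₁] at hv
  by_contra hvu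
  rcases hu with (hu | hu) | hu
  · -- u ∈ V₁
    rw [hV₁] at hu
    exact hC4 (c4_embed G v (f 0) u (f 2)
      (hv _ ⟨0, rfl⟩) ((hu _ ⟨0, rfl⟩).symm) (hu _ ⟨2, rfl⟩) ((hv _ ⟨2, rfl⟩).symm)
      hvu (by rw [f.map_adj_iff]; decide) hne.symm
      (f.injective.ne (show (0 : Fin 5) ≠ 2 by decide)))
  · -- u ∈ V₂
    rw [hV₂] at hu
    obtain ⟨-, hcard⟩ := hu
    obtain ⟨a, b, c, hab, hac, hbc, hS⟩ := Set.ncard_eq_three.mp hcard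
    have ha : a ∈ {u' | u' ∈ Set.range f ∧ G.Adj u u'} := by rw [hS]; simp
    have hb : b ∈ {u' | u' ∈ Set.range f ∧ G.Adj u u'} := by rw [hS]; simp
    have hc : c ∈ {u' | u' ∈ Set.range f ∧ G.Adj u u'} := by rw [hS]; simp
    obtain ⟨⟨i, rfl⟩, hai⟩ := ha
    obtain ⟨⟨j, rfl⟩, hbj⟩ := hb
    obtain ⟨⟨k, rfl⟩, hck⟩ := hc
    have hij : i ≠ j := fun h => hab (congrArg f h)
    have hik : i ≠ k := fun h => hac (congrArg f h)
    have hjk : j ≠ k := fun h => hbc (congrArg f h)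
    have key : ∃ p q : Fin 5, G.Adj u (f p) ∧ G.Adj u (f q) ∧
        ¬(cycleGraph 5).Adj p q ∧ p ≠ q := by
      rcases fin5_nonedge i j k hij hik hjk with h | h | h
      · exact ⟨i, j, hai, hbj, h, hij⟩
      · exact ⟨i, k, hai, hck, h, hik⟩
      · exact ⟨j, k, hbj, hck, h, hjk⟩
    obtain ⟨p, q, hup, huq, hpq, hpq'⟩ := key
    exact hC4 (c4_embed G u (f p) v (f q)
      hup ((hv _ ⟨p, rfl⟩).symm) (hv _ ⟨q, rfl⟩) huq.symm
      (fun h => hvu h.symm) (by rw [f.map_adj_iff]; exact hpq) hne (f.injective.ne hpq'))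
  · -- u ∈ range f
    exact hvu (hv u hu)
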